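/- Let m, n ≥ 1 and let A, B be m×n matrices with real entries. Then exactly one of the following two statements holds: (1) there exists x ∈ ℝ^n such that min_{1≤j≤n} (A_{ij} + x_j) ≤ min_{1≤j≤n} (B_{ij} + x_j) for every i ∈ {1, …, m}; (2) there exists y ∈ ℝ^m such that min_{1≤i≤m} (B_{ij} + y_i) < min_{1≤i≤m} (A_{ij} + y_i) for every j ∈ {1, …, n}. -/

import Mathlib

open Finset Filter Topology

namespace MinplusAux

set_option linter.unusedSectionVars false

variable {m n : ℕ} [Nonempty (Fin m)] [Nonempty (Fin n)]

/-- min-plus product `(A ⊙ x)_i`. -/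
noncomputable def alf (A : Fin m → Fin n → ℝ) (x : Fin n → ℝ) (i : Fin m) : ℝ :=
  univ.inf' univ_nonempty fun j => A i j + x j

/-- The Bellman-type operator whose prefix points solve `A ⊙ x ≤ B ⊙ x`. -/
noncomputable def Top (A B : Fin m → Fin n → ℝ) (x : Fin n → ℝ) (j : Fin n) : ℝ :=
  univ.sup' univ_nonempty fun i => alf A x i - B i j

/-- Oscillation bound for `B`. -/
noncomputable def KB (B : Fin m → Fin n → ℝ) : ℝ :=
  univ.sup' univ_nonempty (fun i => univ.sup' univ_nonempty fun j => B i j)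
    - univ.inf' univ_nonempty (fun i => univ.inf' univ_nonempty fun j => B i j)

variable (A B : Fin m → Fin n → ℝ)

lemma B_sub_le (i : Fin m) (j j' : Fin n) : B i j' - B i j ≤ KB B := by
  have h1 : B i j' ≤ univ.sup' univ_nonempty (fun i => univ.sup' univ_nonempty fun j => B i j) :=
    le_trans (le_sup' (B i) (mem_univ j'))
      (le_sup' (fun i => univ.sup' univ_nonempty fun j => B i j) (mem_univ i))
  have h2 : univ.inf' univ_nonempty (fun i => univ.inf' univ_nonempty fun j => B i j) ≤ B i j :=
    le_trans (inf'_le (fun i => univ.inf' univ_nonempty fun j => B i j) (mem_univ i))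
      (inf'_le (B i) (mem_univ j))
  unfold KB
  linarith

lemma KB_nonneg : 0 ≤ KB B := by
  have := B_sub_le B (Classical.arbitrary _) (Classical.arbitrary _) (Classical.arbitrary _)
  simpa using this

lemma alf_le (x : Fin n → ℝ) (i : Fin m) (j : Fin n) : alf A x i ≤ A i j + x j :=
  inf'_le (fun j => A i j + x j) (mem_univ j)

lemma le_Top (x : Fin n → ℝ) (j : Fin n) (i : Fin m) : alf A x i - B i j ≤ Top A B x j :=
  le_sup' (fun i => alf A x i - B i j) (mem_univ i)

lemma Top_sub_le (x : Fin n → ℝ) (j j' : Fin n) : Top A B x j - Top A B x j' ≤ KB B := by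
  obtain ⟨i, -, hi⟩ := exists_mem_eq_sup' (univ_nonempty) (fun i => alf A x i - B i j)
  have h1 : Top A B x j = alf A x i - B i j := hi
  have h2 := le_Top A B x j' i
  have h3 := B_sub_le B i j j'
  linarith

lemma alf_shift {x x' : Fin n → ℝ} {c : ℝ} (h : ∀ j, x j ≤ x' j + c) (i : Fin m) :
    alf A x i ≤ alf A x' i + c := by
  obtain ⟨j, -, hj⟩ := exists_mem_eq_inf' (univ_nonempty) (fun j => A i j + x' j)
  have h1 : alf A x' i = A i j + x' j := hj
  have h2 := alf_le A x i j
  have h3 := h j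
  linarith

lemma Top_shift {x x' : Fin n → ℝ} {c : ℝ} (h : ∀ j, x j ≤ x' j + c) (j : Fin n) :
    Top A B x j ≤ Top A B x' j + c := by
  apply sup'_le
  intro i _
  have h1 := alf_shift A h i
  have h2 := le_Top A B x' j i
  linarith

lemma Top_lip (x x' : Fin n → ℝ) (j : Fin n) : |Top A B x j - Top A B x' j| ≤ dist x x' := by
  have hb : ∀ u v : Fin n → ℝ, ∀ j' : Fin n, u j' ≤ v j' + dist u v := by
    intro u v j'
    have h := dist_le_pi_dist u v j'
    rw [Real.dist_eq] at h
    have := (abs_le.1 h).2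
    linarith
  have h1 := Top_shift A B (fun j' => hb x x' j') j
  have h2 := Top_shift A B (fun j' => hb x' x j') j
  rw [dist_comm x' x] at h2
  exact abs_le.2 ⟨by linarith, by linarith⟩

lemma cont_Top (j : Fin n) : Continuous fun x : Fin n → ℝ => Top A B x j := by
  have : LipschitzWith 1 fun x : Fin n → ℝ => Top A B x j := by
    apply LipschitzWith.of_dist_le_mul
    intro x x'
    rw [Real.dist_eq, NNReal.coe_one, one_mul]
    exact Top_lip A B x x' j
  exact this.continuous

lemma exists_eigen : ∃ (z : Fin n → ℝ) (v : ℝ), ∀ j, Top A B z j = z j + v := by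
  classical
  have hK0 : 0 ≤ KB B := KB_nonneg B
  set K := KB B with hK
  obtain ⟨j0⟩ := (inferInstance : Nonempty (Fin n))
  -- Step A : approximate eigenvectors via contraction
  have stepA : ∀ l : ℝ, 0 < l → l ≤ 1 →
      ∃ z : Fin n → ℝ, (∀ j, |z j| ≤ K) ∧
        ∀ j j', (Top A B z j - z j) - (Top A B z j' - z j') ≤ l * K := by
    intro l hl0 hl1
    have h1l : 0 ≤ 1 - l := by linarith
    set Phi : (Fin n → ℝ) → (Fin n → ℝ) :=
      fun x j => (1 - l) * (Top A B x j - Top A B x j0) with hPhi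
    have hPhibd : ∀ x j, |Phi x j| ≤ K := by
      intro x j
      have h1 := Top_sub_le A B x j j0
      have h2 := Top_sub_le A B x j0 j
      have habs : |Top A B x j - Top A B x j0| ≤ K := abs_le.2 ⟨by linarith, h1⟩
      have : |Phi x j| = (1 - l) * |Top A B x j - Top A B x j0| := by
        rw [hPhi]; simp [abs_mul, abs_of_nonneg h1l]
      rw [this]
      nlinarith [abs_nonneg (Top A B x j - Top A B x j0)]
    have hPhij0 : ∀ x, Phi x j0 = 0 := by intro x; simp [hPhi]
    have hcontr : ∀ x x' : Fin n → ℝ, ∀ j j' : Fin n,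
        (Phi x j - Phi x' j) - (Phi x j' - Phi x' j') ≤
          (1 - l) * (univ.sup' univ_nonempty (fun j'' => x j'' - x' j'')
                     - univ.inf' univ_nonempty (fun j'' => x j'' - x' j'')) := by
      intro x x' j j'
      set M := univ.sup' univ_nonempty (fun j'' => x j'' - x' j'') with hM
      set mm := univ.inf' univ_nonempty (fun j'' => x j'' - x' j'') with hmm
      have hMle : ∀ j'', x j'' ≤ x' j'' + M := by
        intro j''
        have : x j'' - x' j'' ≤ M := le_sup' (fun j'' => x j'' - x' j'') (mem_univ j'')
        linarith
      have hmmle : ∀ j'', x' j'' ≤ x j'' + -mm := by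
        intro j''
        have : mm ≤ x j'' - x' j'' := inf'_le (fun j'' => x j'' - x' j'') (mem_univ j'')
        linarith
      have h1 := Top_shift A B hMle j
      have h2 := Top_shift A B hmmle j'
      have expand : (Phi x j - Phi x' j) - (Phi x j' - Phi x' j') =
          (1 - l) * ((Top A B x j - Top A B x' j) - (Top A B x j' - Top A B x' j')) := by
        rw [hPhi]; ring
      rw [expand]
      have hmid : (Top A B x j - Top A B x' j) - (Top A B x j' - Top A B x' j') ≤ M - mm := by
        linarith
      exact mul_le_mul_of_nonneg_left hmid h1l
    -- the iteration
    set u : ℕ → (Fin n → ℝ) := fun k => Phi^[k] 0 with hu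
    have husucc : ∀ k, u (k + 1) = Phi (u k) := by
      intro k
      rw [hu]
      exact Function.iterate_succ_apply' Phi k 0
    have huj0 : ∀ k, u k j0 = 0 := by
      intro k
      cases k with
      | zero => simp [hu]
      | succ k => rw [husucc]; exact hPhij0 _
    set osc : ℕ → ℝ := fun k =>
      univ.sup' univ_nonempty (fun j => u (k+1) j - u k j)
        - univ.inf' univ_nonempty (fun j => u (k+1) j - u k j) with hosc
    have habs : ∀ k j, |u (k+1) j - u k j| ≤ osc k := by
      intro k j
      have h1 : u (k+1) j - u k j ≤ univ.sup' univ_nonempty (fun j => u (k+1) j - u k j) :=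
        le_sup' (fun j => u (k+1) j - u k j) (mem_univ j)
      have h4 : univ.inf' univ_nonempty (fun j => u (k+1) j - u k j) ≤ u (k+1) j - u k j :=
        inf'_le (fun j => u (k+1) j - u k j) (mem_univ j)
      have h2 : univ.inf' univ_nonempty (fun j => u (k+1) j - u k j) ≤ 0 := by
        have h := inf'_le (fun j => u (k+1) j - u k j) (mem_univ j0)
        rw [huj0, huj0] at h
        linarith
      have h3 : (0:ℝ) ≤ univ.sup' univ_nonempty (fun j => u (k+1) j - u k j) := by
        have h := le_sup' (fun j => u (k+1) j - u k j) (mem_univ j0)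
        rw [huj0, huj0] at h
        linarith
      simp only [hosc]
      exact abs_le.2 ⟨by linarith, by linarith⟩
    have hosc0 : ∀ k, 0 ≤ osc k := by
      intro k
      have := habs k j0
      rw [huj0, huj0] at this
      simpa using this
    have hoscsucc : ∀ k, osc (k+1) ≤ (1 - l) * osc k := by
      intro k
      obtain ⟨jM, -, hjM⟩ := exists_mem_eq_sup' (univ_nonempty)
        (fun j => u (k+1+1) j - u (k+1) j)
      obtain ⟨jm, -, hjm⟩ := exists_mem_eq_inf' (univ_nonempty)
        (fun j => u (k+1+1) j - u (k+1) j)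
      have h := hcontr (u (k+1)) (u k) jM jm
      have e1M : Phi (u (k+1)) jM = u (k+1+1) jM := by rw [← husucc (k+1)]
      have e1m : Phi (u (k+1)) jm = u (k+1+1) jm := by rw [← husucc (k+1)]
      have e2M : Phi (u k) jM = u (k+1) jM := by rw [← husucc k]
      have e2m : Phi (u k) jm = u (k+1) jm := by rw [← husucc k]
      rw [e1M, e1m, e2M, e2m] at h
      have heq : osc (k+1) = (u (k+1+1) jM - u (k+1) jM) - (u (k+1+1) jm - u (k+1) jm) := by
        simp only [hosc]
        rw [hjM, hjm]
      rw [heq]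
      exact h
    have hoscgeo : ∀ k, osc k ≤ osc 0 * (1 - l) ^ k := by
      intro k
      induction k with
      | zero => simp
      | succ k ih =>
        calc osc (k+1) ≤ (1 - l) * osc k := hoscsucc k
          _ ≤ (1 - l) * (osc 0 * (1 - l) ^ k) := mul_le_mul_of_nonneg_left ih h1l
          _ = osc 0 * (1 - l) ^ (k+1) := by ring
    have hdist : ∀ k, dist (u k) (u (k+1)) ≤ osc 0 * (1 - l) ^ k := by
      intro k
      have hr : (0:ℝ) ≤ osc 0 * (1 - l) ^ k := mul_nonneg (hosc0 0) (pow_nonneg h1l k)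
      rw [dist_pi_le_iff hr]
      intro j
      rw [Real.dist_eq]
      calc |u k j - u (k+1) j| = |u (k+1) j - u k j| := abs_sub_comm _ _
        _ ≤ osc k := habs k j
        _ ≤ osc 0 * (1 - l) ^ k := hoscgeo k
    have hcauchy : CauchySeq u := cauchySeq_of_le_geometric (1 - l) (osc 0) (by linarith) hdist
    obtain ⟨z, hz⟩ := cauchySeq_tendsto_of_complete hcauchy
    have hPhicont : Continuous Phi := by
      apply continuous_pi
      intro j
      rw [hPhi]
      exact continuous_const.mul ((cont_Top A B j).sub (cont_Top A B j0))
    have hfix : Phi z = z := by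
      have h1 : Tendsto (fun k => u (k + 1)) atTop (𝓝 z) := hz.comp (tendsto_add_atTop_nat 1)
      have h2 : Tendsto (fun k => Phi (u k)) atTop (𝓝 (Phi z)) := (hPhicont.tendsto z).comp hz
      have h3 : (fun k => Phi (u k)) = fun k => u (k+1) := funext fun k => (husucc k).symm
      rw [h3] at h2
      exact tendsto_nhds_unique h2 h1
    have hzPhi : ∀ j, z j = (1 - l) * (Top A B z j - Top A B z j0) := by
      intro j
      conv_lhs => rw [← hfix]
    refine ⟨z, ?_, ?_⟩
    · intro j
      have : z j = Phi z j := by rw [hfix]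
      rw [this]
      exact hPhibd z j
    · intro j j'
      have e : ∀ jj, Top A B z jj - z jj = l * Top A B z jj + (1 - l) * Top A B z j0 := by
        intro jj
        rw [hzPhi jj]; ring
      have hsub := Top_sub_le A B z j j'
      have : (Top A B z j - z j) - (Top A B z j' - z j') = l * (Top A B z j - Top A B z j') := by
        rw [e j, e j']; ring
      rw [this]
      exact mul_le_mul_of_nonneg_left hsub (le_of_lt hl0)
  -- Step B : compactness as l → 0
  have hl0 : ∀ k : ℕ, (0:ℝ) < 1 / (k + 1) := by
    intro k; positivity
  have hl1 : ∀ k : ℕ, (1:ℝ) / (k + 1) ≤ 1 := by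
    intro k
    rw [div_le_one (by positivity)]
    have : (0:ℝ) ≤ (k:ℝ) := Nat.cast_nonneg k
    linarith
  choose zs hzbd hzest using fun k : ℕ => stepA (1 / (k + 1)) (hl0 k) (hl1 k)
  have hmem : ∀ k, zs k ∈ Set.pi Set.univ (fun _ : Fin n => Set.Icc (-K) K) := by
    intro k
    rw [Set.mem_univ_pi]
    intro j
    rw [Set.mem_Icc]
    have := hzbd k j
    rw [abs_le] at this
    exact this
  have hcomp : IsCompact (Set.pi Set.univ (fun _ : Fin n => Set.Icc (-K) K)) :=
    isCompact_univ_pi fun _ => isCompact_Icc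
  obtain ⟨zstar, -, φ, hφ, hconv⟩ := hcomp.tendsto_subseq hmem
  have key : ∀ j j', (Top A B zstar j - zstar j) - (Top A B zstar j' - zstar j') ≤ 0 := by
    intro j j'
    have hg : Continuous fun z : Fin n → ℝ =>
        (Top A B z j - z j) - (Top A B z j' - z j') :=
      ((cont_Top A B j).sub (continuous_apply j)).sub ((cont_Top A B j').sub (continuous_apply j'))
    have h1 : Tendsto (fun k => (Top A B (zs (φ k)) j - zs (φ k) j)
        - (Top A B (zs (φ k)) j' - zs (φ k) j')) atTop
        (𝓝 ((Top A B zstar j - zstar j) - (Top A B zstar j' - zstar j'))) := by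
      have := (hg.tendsto zstar).comp hconv
      exact this
    have h2 : Tendsto (fun k : ℕ => (1:ℝ) / (φ k + 1) * K) atTop (𝓝 0) := by
      have ha : Tendsto (fun k : ℕ => (1:ℝ) / (k + 1)) atTop (𝓝 0) :=
        tendsto_one_div_add_atTop_nhds_zero_nat
      have := (ha.comp hφ.tendsto_atTop).mul_const K
      simpa [Function.comp] using this
    exact le_of_tendsto_of_tendsto' h1 h2 (fun k => hzest (φ k) j j')
  refine ⟨zstar, Top A B zstar j0 - zstar j0, fun j => ?_⟩
  have h1 := key j j0
  have h2 := key j0 j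
  linarith

lemma not_both {x : Fin n → ℝ} {y : Fin m → ℝ}
    (hx : ∀ i, univ.inf' univ_nonempty (fun j => A i j + x j) ≤
      univ.inf' univ_nonempty (fun j => B i j + x j))
    (hy : ∀ j, univ.inf' univ_nonempty (fun i => B i j + y i) <
      univ.inf' univ_nonempty (fun i => A i j + y i)) :
    False := by
  obtain ⟨p0, -, hp0⟩ := exists_mem_eq_inf' (univ_nonempty (α := Fin m × Fin n))
    (fun p : Fin m × Fin n => A p.1 p.2 + x p.2 + y p.1)
  have hmin : ∀ p : Fin m × Fin n, A p0.1 p0.2 + x p0.2 + y p0.1 ≤ A p.1 p.2 + x p.2 + y p.1 := by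
    intro p
    rw [← hp0]
    exact inf'_le _ (mem_univ p)
  obtain ⟨i1, -, hi1⟩ := exists_mem_eq_inf' (univ_nonempty (α := Fin m)) (fun i => B i p0.2 + y i)
  have h1 : B i1 p0.2 + y i1 < A p0.1 p0.2 + y p0.1 := by
    have h2 := hy p0.2
    rw [hi1] at h2
    have h3 : univ.inf' univ_nonempty (fun i => A i p0.2 + y i) ≤ A p0.1 p0.2 + y p0.1 :=
      inf'_le _ (mem_univ p0.1)
    linarith
  obtain ⟨j1, -, hj1⟩ := exists_mem_eq_inf' (univ_nonempty (α := Fin n)) (fun j => A i1 j + x j)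
  have h4 : A i1 j1 + x j1 ≤ B i1 p0.2 + x p0.2 := by
    have h5 := hx i1
    rw [hj1] at h5
    have h6 : univ.inf' univ_nonempty (fun j => B i1 j + x j) ≤ B i1 p0.2 + x p0.2 :=
      inf'_le _ (mem_univ p0.2)
    linarith
  have h7 := hmin (i1, j1)
  simp only at h7
  linarith

end MinplusAux

/-- **Min-plus linear duality over ℝ** : for real matrices `A, B`, exactly one of the
following holds: (1) there is `x ∈ ℝ^n` with `A ⊙ x ≤ B ⊙ x` coordinatewise;
(2) there is `y ∈ ℝ^m` with `Bᵀ ⊙ y < Aᵀ ⊙ y` coordinatewise. -/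
theorem minplus_linear_duality_real (m n : ℕ) (hm : 0 < m) (hn : 0 < n)
    (A B : Fin m → Fin n → ℝ) :
    Xor'
      (∃ x : Fin n → ℝ, ∀ i : Fin m,
        Finset.univ.inf' ⟨⟨0, hn⟩, Finset.mem_univ _⟩ (fun j => A i j + x j) ≤
          Finset.univ.inf' ⟨⟨0, hn⟩, Finset.mem_univ _⟩ (fun j => B i j + x j))
      (∃ y : Fin m → ℝ, ∀ j : Fin n,
        Finset.univ.inf' ⟨⟨0, hm⟩, Finset.mem_univ _⟩ (fun i => B i j + y i) <
          Finset.univ.inf' ⟨⟨0, hm⟩, Finset.mem_univ _⟩ (fun i => A i j + y i)) := by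
  haveI : Nonempty (Fin m) := ⟨⟨0, hm⟩⟩
  haveI : Nonempty (Fin n) := ⟨⟨0, hn⟩⟩
  obtain ⟨z, v, hzv⟩ := MinplusAux.exists_eigen A B
  rcases le_or_gt v 0 with hv | hv
  · -- case v ≤ 0 : statement (1) holds with x = z
    have hPz : ∀ i : Fin m,
        Finset.univ.inf' ⟨⟨0, hn⟩, Finset.mem_univ _⟩ (fun j => A i j + z j) ≤
          Finset.univ.inf' ⟨⟨0, hn⟩, Finset.mem_univ _⟩ (fun j => B i j + z j) := by
      intro i
      apply Finset.le_inf'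
      intro j _
      have h1 : MinplusAux.alf A z i - B i j ≤ MinplusAux.Top A B z j :=
        MinplusAux.le_Top A B z j i
      rw [hzv j] at h1
      have h2 : MinplusAux.alf A z i ≤ B i j + z j := by linarith
      exact h2
    exact Or.inl ⟨⟨z, hPz⟩, fun hQ => hQ.elim fun y hy => MinplusAux.not_both A B hPz hy⟩
  · -- case v > 0 : statement (2) holds with y = -(A ⊙ z)
    set y : Fin m → ℝ := fun i => - MinplusAux.alf A z i with hy
    have hQy : ∀ j : Fin n,
        Finset.univ.inf' ⟨⟨0, hm⟩, Finset.mem_univ _⟩ (fun i => B i j + y i) <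
          Finset.univ.inf' ⟨⟨0, hm⟩, Finset.mem_univ _⟩ (fun i => A i j + y i) := by
      intro j
      have hub : Finset.univ.inf' ⟨⟨0, hm⟩, Finset.mem_univ _⟩ (fun i => B i j + y i) ≤
          - z j - v := by
        obtain ⟨istar, -, histar⟩ := Finset.exists_mem_eq_sup' (Finset.univ_nonempty (α := Fin m))
          (fun i => MinplusAux.alf A z i - B i j)
        have h1 : MinplusAux.Top A B z j = MinplusAux.alf A z istar - B istar j := histar
        have h2 := hzv j
        have h3 : B istar j + y istar = - z j - v := by
          rw [hy]
          simp only
          linarith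
        calc Finset.univ.inf' ⟨⟨0, hm⟩, Finset.mem_univ _⟩ (fun i => B i j + y i)
            ≤ B istar j + y istar := Finset.inf'_le _ (Finset.mem_univ istar)
          _ = - z j - v := h3
      have hlb : - z j ≤ Finset.univ.inf' ⟨⟨0, hm⟩, Finset.mem_univ _⟩
          (fun i => A i j + y i) := by
        apply Finset.le_inf'
        intro i _
        have h1 := MinplusAux.alf_le A z i j
        rw [hy]
        simp only
        linarith
      linarith
    exact Or.inr ⟨⟨y, hQy⟩, fun hP => hP.elim fun x hx => MinplusAux.not_both A B hx hQy⟩
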